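/- On the domain {(x,y₁,y₂) ∈ ℝ³ : y₂ < y₁ < x} define F(x,y₁,y₂) = (y₁ + y₂ − 2x) / ((x−y₁)^{1/2}(x−y₂)^{1/2}(y₁−y₂)^{5/4}) and Z(x,y₁,y₂) = (y₁−y₂)^{3/4} / ((x−y₁)^{1/2}(x−y₂)^{1/2}). Then: (i) (∂/∂x + ∂/∂y₁ + ∂/∂y₂) F = 0; (ii) (x ∂/∂x + y₁ ∂/∂y₁ + y₂ ∂/∂y₂ + 5/4) F = 0; and (iii) (x² ∂/∂x + y₁² ∂/∂y₁ + y₂² ∂/∂y₂ + (5/4)(y₁ + y₂)) F = (1/2) Z. That is, F is a highest weight vector of weight 0 (L₁F = 0, L₀F = 0) whose grade-one singular vector L₋₁F = (1/2)Z is nonzero. -/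

import Mathlib

/-- The highest weight vector `F` of weight `0` for SLE₆(ρ₁=-3, ρ₂=-3). -/
noncomputable def F18 (x y₁ y₂ : ℝ) : ℝ :=
  (y₁ + y₂ - 2 * x)
    / ((x - y₁) ^ ((1 : ℝ) / 2) * (x - y₂) ^ ((1 : ℝ) / 2) * (y₁ - y₂) ^ ((5 : ℝ) / 4))

/-- The SLE₆(ρ₁=-3, ρ₂=-3) partition function. -/
noncomputable def Z18 (x y₁ y₂ : ℝ) : ℝ :=
  (y₁ - y₂) ^ ((3 : ℝ) / 4) / ((x - y₁) ^ ((1 : ℝ) / 2) * (x - y₂) ^ ((1 : ℝ) / 2))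

/-- `L₁ F = 0`, `L₀ F = 0` and `L₋₁ F = (1/2) Z`: `F` is a highest
weight vector of weight `0` with nonzero grade-one singular vector. -/
theorem stmt_18 :
    ∀ x y₁ y₂ : ℝ, y₂ < y₁ → y₁ < x →
      (deriv (fun x' => F18 x' y₁ y₂) x + deriv (fun y₁' => F18 x y₁' y₂) y₁
          + deriv (fun y₂' => F18 x y₁ y₂') y₂ = 0)
      ∧ (x * deriv (fun x' => F18 x' y₁ y₂) x + y₁ * deriv (fun y₁' => F18 x y₁' y₂) y₁
          + y₂ * deriv (fun y₂' => F18 x y₁ y₂') y₂ + 5 / 4 * F18 x y₁ y₂ = 0)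
      ∧ (x ^ 2 * deriv (fun x' => F18 x' y₁ y₂) x
          + y₁ ^ 2 * deriv (fun y₁' => F18 x y₁' y₂) y₁
          + y₂ ^ 2 * deriv (fun y₂' => F18 x y₁ y₂') y₂
          + 5 / 4 * (y₁ + y₂) * F18 x y₁ y₂
          = 1 / 2 * Z18 x y₁ y₂) := by
  intro x y₁ y₂ h2 h1
  have ha : (0:ℝ) < x - y₁ := by linarith
  have hb : (0:ℝ) < x - y₂ := by linarith
  have hc : (0:ℝ) < y₁ - y₂ := by linarith
  have hA : (x - y₁) ^ ((1:ℝ)/2) ≠ 0 := by positivity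
  have hB : (x - y₂) ^ ((1:ℝ)/2) ≠ 0 := by positivity
  have hC : (y₁ - y₂) ^ ((5:ℝ)/4) ≠ 0 := by positivity
  have hden : (x - y₁) ^ ((1:ℝ)/2) * (x - y₂) ^ ((1:ℝ)/2) * (y₁ - y₂) ^ ((5:ℝ)/4) ≠ 0 := by
    positivity
  have hra : (x - y₁) ^ ((1:ℝ)/2 - 1) = (x - y₁) ^ ((1:ℝ)/2) / (x - y₁) := by
    rw [Real.rpow_sub ha, Real.rpow_one]
  have hrb : (x - y₂) ^ ((1:ℝ)/2 - 1) = (x - y₂) ^ ((1:ℝ)/2) / (x - y₂) := by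
    rw [Real.rpow_sub hb, Real.rpow_one]
  have hrc : (y₁ - y₂) ^ ((5:ℝ)/4 - 1) = (y₁ - y₂) ^ ((5:ℝ)/4) / (y₁ - y₂) := by
    rw [Real.rpow_sub hc, Real.rpow_one]
  -- derivative in x
  have hdx : deriv (fun x' => F18 x' y₁ y₂) x =
      (-2 - (y₁ + y₂ - 2*x)/(2*(x - y₁)) - (y₁ + y₂ - 2*x)/(2*(x - y₂)))
        / ((x - y₁) ^ ((1:ℝ)/2) * (x - y₂) ^ ((1:ℝ)/2) * (y₁ - y₂) ^ ((5:ℝ)/4)) := by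
    have hu : HasDerivAt (fun x' : ℝ => (x' - y₁) ^ ((1:ℝ)/2))
        (1 * ((1:ℝ)/2) * (x - y₁) ^ ((1:ℝ)/2 - 1)) x :=
      ((hasDerivAt_id x).sub_const y₁).rpow_const (Or.inl ha.ne')
    have hv : HasDerivAt (fun x' : ℝ => (x' - y₂) ^ ((1:ℝ)/2))
        (1 * ((1:ℝ)/2) * (x - y₂) ^ ((1:ℝ)/2 - 1)) x :=
      ((hasDerivAt_id x).sub_const y₂).rpow_const (Or.inl hb.ne')
    have hN : HasDerivAt (fun x' : ℝ => y₁ + y₂ - 2 * x') (0 - 2 * 1) x :=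
      (hasDerivAt_const x (y₁ + y₂)).sub ((hasDerivAt_id x).const_mul 2)
    have H := hN.div ((hu.mul hv).mul_const ((y₁ - y₂) ^ ((5:ℝ)/4))) hden
    simp only [F18]
    refine H.deriv.trans ?_
    simp only [Pi.mul_apply]
    rw [hra, hrb]
    field_simp
    ring
  -- derivative in y₁
  have hd1 : deriv (fun y₁' => F18 x y₁' y₂) y₁ =
      (1 + (y₁ + y₂ - 2*x)/(2*(x - y₁)) - 5*(y₁ + y₂ - 2*x)/(4*(y₁ - y₂)))
        / ((x - y₁) ^ ((1:ℝ)/2) * (x - y₂) ^ ((1:ℝ)/2) * (y₁ - y₂) ^ ((5:ℝ)/4)) := by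
    have hu : HasDerivAt (fun y₁' : ℝ => (x - y₁') ^ ((1:ℝ)/2))
        ((-1) * ((1:ℝ)/2) * (x - y₁) ^ ((1:ℝ)/2 - 1)) y₁ :=
      ((hasDerivAt_id y₁).const_sub x).rpow_const (Or.inl ha.ne')
    have hw : HasDerivAt (fun y₁' : ℝ => (y₁' - y₂) ^ ((5:ℝ)/4))
        (1 * ((5:ℝ)/4) * (y₁ - y₂) ^ ((5:ℝ)/4 - 1)) y₁ :=
      ((hasDerivAt_id y₁).sub_const y₂).rpow_const (Or.inl hc.ne')
    have hN : HasDerivAt (fun y₁' : ℝ => y₁' + y₂ - 2 * x) 1 y₁ :=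
      ((hasDerivAt_id y₁).add_const y₂).sub_const (2 * x)
    have H := hN.div ((hu.mul_const ((x - y₂) ^ ((1:ℝ)/2))).mul hw) hden
    simp only [F18]
    refine H.deriv.trans ?_
    simp only [Pi.mul_apply]
    rw [hra, hrc]
    field_simp
    ring
  -- derivative in y₂
  have hd2 : deriv (fun y₂' => F18 x y₁ y₂') y₂ =
      (1 + (y₁ + y₂ - 2*x)/(2*(x - y₂)) + 5*(y₁ + y₂ - 2*x)/(4*(y₁ - y₂)))
        / ((x - y₁) ^ ((1:ℝ)/2) * (x - y₂) ^ ((1:ℝ)/2) * (y₁ - y₂) ^ ((5:ℝ)/4)) := by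
    have hv : HasDerivAt (fun y₂' : ℝ => (x - y₂') ^ ((1:ℝ)/2))
        ((-1) * ((1:ℝ)/2) * (x - y₂) ^ ((1:ℝ)/2 - 1)) y₂ :=
      ((hasDerivAt_id y₂).const_sub x).rpow_const (Or.inl hb.ne')
    have hw : HasDerivAt (fun y₂' : ℝ => (y₁ - y₂') ^ ((5:ℝ)/4))
        ((-1) * ((5:ℝ)/4) * (y₁ - y₂) ^ ((5:ℝ)/4 - 1)) y₂ :=
      ((hasDerivAt_id y₂).const_sub y₁).rpow_const (Or.inl hc.ne')
    have hN : HasDerivAt (fun y₂' : ℝ => y₁ + y₂' - 2 * x) 1 y₂ :=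
      ((hasDerivAt_id y₂).const_add y₁).sub_const (2 * x)
    have H := hN.div ((hv.const_mul ((x - y₁) ^ ((1:ℝ)/2))).mul hw) hden
    simp only [F18]
    refine H.deriv.trans ?_
    simp only [Pi.mul_apply]
    rw [hrb, hrc]
    field_simp
    ring
  have hz : (y₁ - y₂) ^ ((3:ℝ)/4) = (y₁ - y₂) ^ 2 / (y₁ - y₂) ^ ((5:ℝ)/4) := by
    rw [eq_div_iff hC, ← Real.rpow_add hc]
    rw [show (3:ℝ)/4 + 5/4 = ((2:ℕ) : ℝ) by norm_num, Real.rpow_natCast]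
  refine ⟨?_, ?_, ?_⟩
  · rw [hdx, hd1, hd2]
    field_simp
    ring
  · rw [hdx, hd1, hd2]
    simp only [F18]
    field_simp
    ring
  · rw [hdx, hd1, hd2]
    simp only [F18, Z18, hz]
    field_simp
    ring
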